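/- Let (X, Σ, μ) be a measure space, Y a Banach space over ℝ, 1 ≤ p ≤ ∞, and let L^p(μ, Y) denote the Banach space of (equivalence classes of) Bochner-measurable Y-valued functions with finite L^p-norm. Let {T_k}_{k∈ℕ} be a sequence of maps T_k : L^p(μ, Y) → L^p(μ, Y) such that, for some γ ∈ [0,1) and M > 0, every T_k is Lipschitz with constant at most γ and ‖T_k(0)‖_{L^p} ≤ M for all k. Then there exists f* ∈ L^p(μ, Y) with ‖f*‖_{L^p} ≤ M/(1−γ) such that for every f_0 ∈ L^p(μ, Y) with ‖f_0‖_{L^p} ≤ M/(1−γ), the backward trajectories Ψ_k(f_0) := T_1 ∘ T_2 ∘ ⋯ ∘ T_k (f_0) converge to f* in L^p(μ, Y) as k → ∞; in particular the limit f* is independent of the choice of f_0 in this ball. -/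

import Mathlib

open Filter Topology MeasureTheory

/-- Backward trajectory of a sequence of operators:
`backwardTraj T k = T 0 ∘ T 1 ∘ ⋯ ∘ T (k-1)`. -/
def backwardTraj {α : Type*} (T : ℕ → α → α) : ℕ → α → α
  | 0 => id
  | k + 1 => fun a => backwardTraj T k (T k a)

lemma backwardTraj_lipschitz {α : Type*} [PseudoEMetricSpace α] {T : ℕ → α → α} {γ : NNReal}
    (hlip : ∀ k, LipschitzWith γ (T k)) : ∀ k, LipschitzWith (γ ^ k) (backwardTraj T k)
  | 0 => by simpa [backwardTraj] using LipschitzWith.id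
  | k + 1 => by
      have h := (backwardTraj_lipschitz hlip k).comp (hlip k)
      rw [pow_succ]
      exact h

/-- If `T_k : L^p(μ,Y) → L^p(μ,Y)` are uniformly Lipschitz with constant
`γ < 1` and `‖T_k 0‖ ≤ M`, then there is `f* ∈ L^p(μ,Y)` with `‖f*‖ ≤ M/(1-γ)` such that
the backward trajectories of every `f₀` with `‖f₀‖ ≤ M/(1-γ)` converge to `f*` in
`L^p(μ,Y)` (a non-stationary fractal function of class `L^p`). -/
theorem nonstationary_fractal_function_Lp {X Y : Type*} [MeasurableSpace X]
    [NormedAddCommGroup Y] [NormedSpace ℝ Y] [CompleteSpace Y]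
    (μ : Measure X) (p : ENNReal) [Fact (1 ≤ p)]
    (T : ℕ → Lp Y p μ → Lp Y p μ)
    (γ : NNReal) (hγ : γ < 1) (M : ℝ) (hM : 0 < M)
    (hlip : ∀ k, LipschitzWith γ (T k))
    (hT0 : ∀ k, ‖T k 0‖ ≤ M) :
    ∃ fs : Lp Y p μ, ‖fs‖ ≤ M / (1 - (γ : ℝ)) ∧
      ∀ f₀ : Lp Y p μ, ‖f₀‖ ≤ M / (1 - (γ : ℝ)) →
        Tendsto (fun k => backwardTraj T k f₀) atTop (𝓝 fs) := by
  have hγ' : (γ : ℝ) < 1 := hγ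
  have hγ0 : (0:ℝ) ≤ γ := γ.2
  set R : ℝ := M / (1 - (γ : ℝ)) with hR
  have h1γ : (0:ℝ) < 1 - γ := by linarith
  have hRpos : 0 < R := div_pos hM h1γ
  -- the ball of radius R is invariant under each T k
  have hball : ∀ k (f : Lp Y p μ), ‖f‖ ≤ R → ‖T k f‖ ≤ R := by
    intro k f hf
    have h1 : ‖T k f - T k 0‖ ≤ γ * ‖f‖ := by
      simpa [dist_eq_norm] using (hlip k).dist_le_mul f 0
    have h2 : ‖T k f‖ ≤ ‖T k f - T k 0‖ + ‖T k 0‖ := by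
      simpa using norm_sub_le_norm_sub_add_norm_sub (T k f) (T k 0) 0
    have h3 : ‖T k f‖ ≤ γ * R + M := by
      have := mul_le_mul_of_nonneg_left hf hγ0
      linarith [hT0 k]
    have : γ * R + M = R := by
      field_simp [hR]
      rw [hR]
      field_simp
      ring
    linarith
  have hΨball : ∀ k (f : Lp Y p μ), ‖f‖ ≤ R → ‖backwardTraj T k f‖ ≤ R := by
    intro k
    induction k with
    | zero => intro f hf; simpa [backwardTraj] using hf
    | succ k ih => intro f hf; exact ih _ (hball k f hf)
  have hΨlip := backwardTraj_lipschitz hlip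
  -- the base trajectory from 0 is Cauchy
  set g : ℕ → Lp Y p μ := fun k => backwardTraj T k (0 : Lp Y p μ) with hg
  have hdist : ∀ n, dist (g n) (g (n + 1)) ≤ M * (γ : ℝ) ^ n := by
    intro n
    have h1 : dist (g n) (g (n + 1)) ≤ (γ : ℝ) ^ n * dist (0 : Lp Y p μ) (T n 0) := by
      have := (hΨlip n).dist_le_mul (0 : Lp Y p μ) (T n 0)
      simpa [hg, backwardTraj, NNReal.coe_pow] using this
    have h2 : dist (0 : Lp Y p μ) (T n 0) ≤ M := by
      simpa [dist_comm, dist_zero_right] using hT0 n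
    calc dist (g n) (g (n + 1)) ≤ (γ : ℝ) ^ n * dist (0 : Lp Y p μ) (T n 0) := h1
      _ ≤ (γ : ℝ) ^ n * M := by
          exact mul_le_mul_of_nonneg_left h2 (pow_nonneg hγ0 n)
      _ = M * (γ : ℝ) ^ n := by ring
  have hcauchy : CauchySeq g := cauchySeq_of_le_geometric (γ : ℝ) M hγ' hdist
  obtain ⟨fs, hfs⟩ := cauchySeq_tendsto_of_complete hcauchy
  refine ⟨fs, ?_, ?_⟩
  · -- norm bound on the limit
    have hgn : ∀ n, ‖g n‖ ≤ R := fun n => hΨball n 0 (by simpa using hRpos.le)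
    exact le_of_tendsto (hfs.norm) (Eventually.of_forall hgn)
  · intro f₀ hf₀
    have hd : Tendsto (fun k => dist (g k) (backwardTraj T k f₀)) atTop (𝓝 0) := by
      have hb : ∀ k, dist (g k) (backwardTraj T k f₀) ≤ R * (γ : ℝ) ^ k := by
        intro k
        have h1 := (hΨlip k).dist_le_mul (0 : Lp Y p μ) f₀
        have h2 : dist (0 : Lp Y p μ) f₀ ≤ R := by
          simpa [dist_comm, dist_zero_right] using hf₀
        calc dist (g k) (backwardTraj T k f₀)
            ≤ (γ : ℝ) ^ k * dist (0 : Lp Y p μ) f₀ := by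
              simpa [hg, NNReal.coe_pow] using h1
          _ ≤ (γ : ℝ) ^ k * R := mul_le_mul_of_nonneg_left h2 (pow_nonneg hγ0 k)
          _ = R * (γ : ℝ) ^ k := by ring
      have hlim : Tendsto (fun k => R * (γ : ℝ) ^ k) atTop (𝓝 0) := by
        simpa using (tendsto_pow_atTop_nhds_zero_of_lt_one hγ0 hγ').const_mul R
      exact squeeze_zero (fun k => dist_nonneg) hb hlim
    exact hfs.congr_dist hd
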